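/- Continuum generalized Liouville identity (equations (eq:glv)–(eq:glv:q), written with sᵢ = σᵢ^{1/2}). Let Ω be an open subset of EuclideanSpace ℝ (Fin 2), let s₀, s₁, v : EuclideanSpace ℝ (Fin 2) → ℝ be twice continuously differentiable on Ω with s₀(x) > 0 and s₁(x) > 0 for all x ∈ Ω, and set σ₀ = s₀², σ₁ = s₁² and ρ = s₁/s₀ (so ρ = (σ₁/σ₀)^{1/2}). Then for every x ∈ Ω, (1/ρ(x)) · ( −div( σ₁ · ∇(v/ρ) )(x) ) = −div( σ₀ · ∇v )(x) + q(x) · v(x), where q = div(σ₀ · ∇ρ)/ρ; i.e. the operators L_{σ₁,0} and L_{σ₀,q} are Liouville congruent via the factor (σ₁/σ₀)^{-1/2}. -/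

import Mathlib

open BigOperators

/-- The divergence of a vector field `F` on `EuclideanSpace ℝ (Fin 2)`:
`div F (x) = ∑ᵢ ⟨fderiv ℝ F x (eᵢ), eᵢ⟩` with `(eᵢ)` the standard orthonormal basis. -/
noncomputable def diverg (F : EuclideanSpace ℝ (Fin 2) → EuclideanSpace ℝ (Fin 2))
    (x : EuclideanSpace ℝ (Fin 2)) : ℝ :=
  ∑ i, fderiv ℝ F x (EuclideanSpace.single i (1 : ℝ)) i

local notation "E2" => EuclideanSpace ℝ (Fin 2)

lemma gradient_apply' (f : E2 → ℝ) (x : E2) (i : Fin 2) :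
    gradient f x i = fderiv ℝ f x (EuclideanSpace.single i 1) := by
  have h := InnerProductSpace.toDual_symm_apply (𝕜 := ℝ) (E := E2)
    (y := fderiv ℝ f x) (x := EuclideanSpace.single i (1 : ℝ))
  rw [gradient, ← h, EuclideanSpace.inner_single_right]
  simp

lemma diverg_congr {F G : E2 → E2} {x : E2} (h : F =ᶠ[nhds x] G) :
    diverg F x = diverg G x := by
  unfold diverg
  rw [Filter.EventuallyEq.fderiv_eq h]

lemma diverg_sub {F G : E2 → E2} {x : E2} (hF : DifferentiableAt ℝ F x)
    (hG : DifferentiableAt ℝ G x) :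
    diverg (fun y => F y - G y) x = diverg F x - diverg G x := by
  unfold diverg
  rw [fderiv_fun_sub hF hG]
  simp [Finset.sum_sub_distrib]

lemma diverg_smul (f : E2 → ℝ) (G : E2 → E2) (x : E2)
    (hf : DifferentiableAt ℝ f x) (hG : DifferentiableAt ℝ G x) :
    diverg (fun y => f y • G y) x
      = (∑ i, fderiv ℝ f x (EuclideanSpace.single i 1) * G x i) + f x * diverg G x := by
  unfold diverg
  rw [fderiv_fun_smul hf hG]
  simp only [ContinuousLinearMap.add_apply, ContinuousLinearMap.coe_smul',
    Pi.smul_apply, ContinuousLinearMap.smulRight_apply, PiLp.add_apply,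
    PiLp.smul_apply, smul_eq_mul]
  rw [Finset.sum_add_distrib, Finset.mul_sum]
  ring_nf

lemma differentiableAt_gradient {f : E2 → ℝ} {x : E2} (hf : ContDiffAt ℝ 2 f x) :
    DifferentiableAt ℝ (gradient f) x := by
  have h2 : DifferentiableAt ℝ (fderiv ℝ f) x :=
    (hf.fderiv_right (m := 1) (by norm_num)).differentiableAt (by norm_num)
  have : gradient f = fun y => (InnerProductSpace.toDual ℝ E2).symm (fderiv ℝ f y) := rfl
  rw [this]
  exact ((InnerProductSpace.toDual ℝ E2).symm.toContinuousLinearEquiv.differentiableAt).comp x h2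

theorem continuum_generalized_liouville_identity
    (Ω : Set (EuclideanSpace ℝ (Fin 2))) (hΩ : IsOpen Ω)
    (s₀ s₁ v : EuclideanSpace ℝ (Fin 2) → ℝ)
    (hs₀ : ContDiffOn ℝ 2 s₀ Ω) (hs₁ : ContDiffOn ℝ 2 s₁ Ω)
    (hv : ContDiffOn ℝ 2 v Ω)
    (hs₀pos : ∀ x ∈ Ω, 0 < s₀ x) (hs₁pos : ∀ x ∈ Ω, 0 < s₁ x) :
    ∀ x ∈ Ω,
      (1 / (s₁ x / s₀ x)) *
          (-(diverg (fun y => (s₁ y) ^ 2 •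
              gradient (fun z => v z / (s₁ z / s₀ z)) y) x))
        = -(diverg (fun y => (s₀ y) ^ 2 • gradient v y) x)
          + (diverg (fun y => (s₀ y) ^ 2 •
              gradient (fun z => s₁ z / s₀ z) y) x / (s₁ x / s₀ x)) * v x := by
  intro x hx
  set ρ : E2 → ℝ := fun z => s₁ z / s₀ z with hρdef
  set G : E2 → E2 := fun y => (s₀ y) ^ 2 • gradient v y with hGdef
  set H : E2 → E2 := fun y => (s₀ y) ^ 2 • gradient ρ y with hHdef
  have hs₀x : s₀ x ≠ 0 := (hs₀pos x hx).ne'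
  have hs₁x : s₁ x ≠ 0 := (hs₁pos x hx).ne'
  have hρx : ρ x ≠ 0 := div_ne_zero hs₁x hs₀x
  -- pointwise diff facts on Ω
  have cAt : ∀ y ∈ Ω, ContDiffAt ℝ 2 s₀ y ∧ ContDiffAt ℝ 2 s₁ y ∧ ContDiffAt ℝ 2 v y :=
    fun y hy => ⟨hs₀.contDiffAt (hΩ.mem_nhds hy), hs₁.contDiffAt (hΩ.mem_nhds hy),
      hv.contDiffAt (hΩ.mem_nhds hy)⟩
  have cρ : ∀ y ∈ Ω, ContDiffAt ℝ 2 ρ y := fun y hy =>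
    ((cAt y hy).2.1).div ((cAt y hy).1) (hs₀pos y hy).ne'
  -- Step A: field identity on Ω
  have key : ∀ y ∈ Ω,
      (s₁ y) ^ 2 • gradient (fun z => v z / ρ z) y = ρ y • G y - v y • H y := by
    intro y hy
    have hs₀y : s₀ y ≠ 0 := (hs₀pos y hy).ne'
    have hs₁y : s₁ y ≠ 0 := (hs₁pos y hy).ne'
    have hρy : ρ y ≠ 0 := div_ne_zero hs₁y hs₀y
    have hvd : DifferentiableAt ℝ v y := ((cAt y hy).2.2).differentiableAt (by norm_num)
    have hρd : DifferentiableAt ℝ ρ y := (cρ y hy).differentiableAt (by norm_num)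
    have hv' : HasFDerivAt v (fderiv ℝ v y) y := hvd.hasFDerivAt
    have hρ' : HasFDerivAt ρ (fderiv ℝ ρ y) y := hρd.hasFDerivAt
    have hinv : HasFDerivAt (fun z => (ρ z)⁻¹)
        ((-(ρ y ^ 2)⁻¹) • fderiv ℝ ρ y) y := by
      have := (hasDerivAt_inv hρy).comp_hasFDerivAt y hρ'
      simpa [Function.comp_def] using this
    have hq : HasFDerivAt (fun z => v z / ρ z)
        (v y • ((-(ρ y ^ 2)⁻¹) • fderiv ℝ ρ y) + (ρ y)⁻¹ • fderiv ℝ v y) y := by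
      have := hv'.fun_mul hinv
      simpa [div_eq_mul_inv] using this
    have hqf := hq.fderiv
    apply PiLp.ext
    intro i
    simp only [PiLp.smul_apply, PiLp.sub_apply, smul_eq_mul, hGdef, hHdef]
    rw [gradient_apply', gradient_apply', gradient_apply', hqf]
    simp only [ContinuousLinearMap.add_apply, ContinuousLinearMap.coe_smul',
      Pi.smul_apply, smul_eq_mul]
    have hρy' : ρ y = s₁ y / s₀ y := rfl
    rw [hρy']
    field_simp
    ring
  -- Step B: divergence computation at x
  have hmem : Ω ∈ nhds x := hΩ.mem_nhds hx
  have heq : (fun y => (s₁ y) ^ 2 • gradient (fun z => v z / ρ z) y)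
      =ᶠ[nhds x] (fun y => ρ y • G y - v y • H y) :=
    Filter.eventually_of_mem hmem key
  have hvdx : DifferentiableAt ℝ v x := ((cAt x hx).2.2).differentiableAt (by norm_num)
  have hρdx : DifferentiableAt ℝ ρ x := (cρ x hx).differentiableAt (by norm_num)
  have hGd : DifferentiableAt ℝ G x := by
    apply DifferentiableAt.fun_smul
    · exact (((cAt x hx).1).differentiableAt (by norm_num)).pow 2
    · exact differentiableAt_gradient ((cAt x hx).2.2)
  have hHd : DifferentiableAt ℝ H x := by
    apply DifferentiableAt.fun_smul
    · exact (((cAt x hx).1).differentiableAt (by norm_num)).pow 2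
    · exact differentiableAt_gradient (cρ x hx)
  have h1 : diverg (fun y => (s₁ y) ^ 2 • gradient (fun z => v z / ρ z) y) x
      = diverg (fun y => ρ y • G y) x - diverg (fun y => v y • H y) x := by
    rw [diverg_congr heq]
    exact diverg_sub (hρdx.smul hGd) (hvdx.smul hHd)
  rw [h1, diverg_smul ρ G x hρdx hGd, diverg_smul v H x hvdx hHd]
  have hcross : (∑ i, fderiv ℝ ρ x (EuclideanSpace.single i 1) * G x i)
      = (∑ i, fderiv ℝ v x (EuclideanSpace.single i 1) * H x i) := by
    apply Finset.sum_congr rfl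
    intro i _
    simp only [hGdef, hHdef, PiLp.smul_apply, smul_eq_mul]
    rw [gradient_apply', gradient_apply']
    ring
  rw [hcross]
  have hρeq : ρ x = s₁ x / s₀ x := rfl
  rw [hρeq]
  field_simp
  ring
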